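/- In the ring R of 4 × 4 matrices over the complex numbers, let a = E₁₃ (the matrix unit with 1 in position (1,3) and 0 elsewhere), b = E₂₄, and c = E₁₃ + E₁₄ + E₂₄. Then a ≤⁻ c, b ≤⁻ c, aR ∩ bR = {0}, Ra ∩ Rb = {0}, and yet a + b ≤⁻ c fails. (This answers a question of Hartwig in the negative.) -/

import Mathlib

/-- The right ideal `aR = {a*r : r ∈ R}`. -/
def rId {R : Type*} [Ring R] (a : R) : Set R := Set.range (fun r => a * r)

/-- The left ideal `Ra = {r*a : r ∈ R}`. -/
def lId {R : Type*} [Ring R] (a : R) : Set R := Set.range (fun r => r * a)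

/-- The minus partial order. -/
def minusLE {R : Type*} [Ring R] (a b : R) : Prop :=
  ∃ x : R, a * x * a = a ∧ a * x = b * x ∧ x * a = x * b

/-- `E₁₃` in `M₄(ℂ)` (rows and columns indexed `1,…,4`). -/
noncomputable def E13 : Matrix (Fin 4) (Fin 4) ℂ := Matrix.single 0 2 1

/-- `E₂₄` in `M₄(ℂ)`. -/
noncomputable def E24 : Matrix (Fin 4) (Fin 4) ℂ := Matrix.single 1 3 1

/-- `E₁₄` in `M₄(ℂ)`. -/
noncomputable def E14 : Matrix (Fin 4) (Fin 4) ℂ := Matrix.single 0 3 1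

theorem stmt6 :
    minusLE E13 (E13 + E14 + E24) ∧
    minusLE E24 (E13 + E14 + E24) ∧
    rId E13 ∩ rId E24 = {0} ∧
    lId E13 ∩ lId E24 = {0} ∧
    ¬ minusLE (E13 + E24) (E13 + E14 + E24) := by
  refine ⟨?_, ?_, ?_, ?_, ?_⟩
  · refine ⟨Matrix.single 2 0 1 - Matrix.single 2 1 1, ?_, ?_, ?_⟩ <;>
      simp [E13, E14, E24, mul_sub, sub_mul, add_mul, mul_add,
        Matrix.single_mul_single_same, Matrix.single_mul_single_of_ne]
  · refine ⟨Matrix.single 3 1 1 - Matrix.single 2 1 1, ?_, ?_, ?_⟩ <;>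
      simp [E13, E14, E24, mul_sub, sub_mul, add_mul, mul_add,
        Matrix.single_mul_single_same, Matrix.single_mul_single_of_ne]
  · ext m
    simp only [rId, Set.mem_inter_iff, Set.mem_range, Set.mem_singleton_iff]
    constructor
    · rintro ⟨⟨r, hr⟩, ⟨s, hs⟩⟩
      ext i j
      by_cases h : i = 0
      · rw [← hs, h, E24]; simp
      · rw [← hr, E13]; simp [h]
    · rintro rfl; exact ⟨⟨0, by simp⟩, ⟨0, by simp⟩⟩
  · ext m
    simp only [lId, Set.mem_inter_iff, Set.mem_range, Set.mem_singleton_iff]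
    constructor
    · rintro ⟨⟨r, hr⟩, ⟨s, hs⟩⟩
      ext i j
      by_cases h : j = 2
      · rw [← hs, h, E24]; simp
      · rw [← hr, E13]; simp [h]
    · rintro rfl; exact ⟨⟨0, by simp⟩, ⟨0, by simp⟩⟩
  · rintro ⟨x, h1, h2, h3⟩
    have hx3 : ∀ j, x 3 j = 0 := by
      intro j
      have h := congrFun (congrFun h2 0) j
      simp [E13, E14, E24, Matrix.mul_apply, Matrix.single,
        Fin.sum_univ_four, Matrix.add_apply] at h
      linear_combination h
    have h := congrFun (congrFun h1 1) 3
    simp [E13, E14, E24, Matrix.mul_apply, Matrix.single,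
      Fin.sum_univ_four, Matrix.add_apply, hx3] at h
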